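/- Let N ≥ 2 be an even integer and let α > −1 be a real number. Then ∫₀^∞ x^{α/2} · e^{−x/2} · L_{N−1}^{α+1}(x) dx = 0. -/

import Mathlib

open Real MeasureTheory Set

/-- Generalized Laguerre polynomial
L_N^α(x) = Σ_{k=0}^N (−1)^k · Γ(N+α+1)/(Γ(k+α+1)·(N−k)!·k!) · x^k. -/
noncomputable def laguerreL (N : ℕ) (α : ℝ) (x : ℝ) : ℝ :=
  ∑ k ∈ Finset.range (N + 1),
    (-1 : ℝ) ^ k *
      (Real.Gamma ((N : ℝ) + α + 1) /
        (Real.Gamma ((k : ℝ) + α + 1) * (Nat.factorial (N - k)) * (Nat.factorial k))) *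
      x ^ k

section Aux
open intervalIntegral

-- beta integrability
lemma betaIntegrable {a b : ℝ} (ha : -1 < a) (hb : -1 < b) :
    IntervalIntegrable (fun t : ℝ => t ^ a * (1 - t) ^ b) volume 0 1 := by
  have h1 : IntervalIntegrable (fun t : ℝ => t ^ a * (1 - t) ^ b) volume 0 (1/2) := by
    apply (intervalIntegrable_rpow' ha).mul_continuousOn
    apply ContinuousOn.rpow_const (by fun_prop)
    intro t ht
    left
    rw [uIcc_of_le (by norm_num)] at ht
    have := ht.2
    intro h; nlinarith [ht.2]
  have h2 : IntervalIntegrable (fun t : ℝ => t ^ a * (1 - t) ^ b) volume (1/2) 1 := by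
    have base : IntervalIntegrable (fun t : ℝ => (1 - t) ^ b) volume (1/2) 1 := by
      have := ((intervalIntegrable_rpow' hb (a := 0) (b := 1/2)).comp_sub_left 1).symm
      norm_num at this
      convert this using 2 <;> norm_num
    have := base.mul_continuousOn (g := fun t : ℝ => t ^ a) ?_
    · simpa [mul_comm] using this
    · apply ContinuousOn.rpow_const (by fun_prop)
      intro t ht
      left
      rw [uIcc_of_le (by norm_num)] at ht
      intro h; nlinarith [ht.1]
  exact h1.trans h2

-- beta value
lemma betaVal {a b : ℝ} (ha : 0 < a) (hb : 0 < b) :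
    ∫ t in (0:ℝ)..1, t ^ (a - 1) * (1 - t) ^ (b - 1)
      = Real.Gamma a * Real.Gamma b / Real.Gamma (a + b) := by
  have key := Complex.Gamma_mul_Gamma_eq_betaIntegral
    (s := (a:ℂ)) (t := (b:ℂ)) (by simpa using ha) (by simpa using hb)
  have hbeta : Complex.betaIntegral a b
      = ((∫ t in (0:ℝ)..1, t ^ (a - 1) * (1 - t) ^ (b - 1) : ℝ) : ℂ) := by
    rw [Complex.betaIntegral, ← intervalIntegral.integral_ofReal]
    apply intervalIntegral.integral_congr
    intro x hx
    rw [uIcc_of_le (by norm_num)] at hx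
    push_cast
    rw [Complex.ofReal_cpow hx.1, Complex.ofReal_cpow (by linarith [hx.2])]
    push_cast
    ring
  rw [hbeta, ← Complex.ofReal_add, Complex.Gamma_ofReal, Complex.Gamma_ofReal,
    Complex.Gamma_ofReal] at key
  have hne : Real.Gamma (a + b) ≠ 0 := (Real.Gamma_pos_of_pos (by linarith)).ne'
  have key' : Real.Gamma a * Real.Gamma b
      = Real.Gamma (a + b) * ∫ t in (0:ℝ)..1, t ^ (a - 1) * (1 - t) ^ (b - 1) := by
    exact_mod_cast key
  field_simp [key']
  linear_combination -key'


lemma oddint {b : ℝ} {M : ℕ} (hM : Odd M) :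
    ∫ t in (0:ℝ)..1, t ^ b * (1 - t) ^ b * (1 - 2*t) ^ M = 0 := by
  set f : ℝ → ℝ := fun t => t ^ b * (1 - t) ^ b * (1 - 2*t) ^ M with hf
  have key : ∀ t : ℝ, f (1 - t) = -(f t) := by
    intro t
    simp only [hf]
    have h1 : (1:ℝ) - (1 - t) = t := by ring
    have h2 : (1:ℝ) - 2*(1 - t) = -(1 - 2*t) := by ring
    rw [h1, h2, hM.neg_pow]
    ring
  have h3 : (∫ t in (0:ℝ)..1, f (1 - t)) = ∫ t in (0:ℝ)..1, f t := by
    have := intervalIntegral.integral_comp_sub_left (a := (0:ℝ)) (b := 1) f 1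
    simpa using this
  have h4 : (∫ t in (0:ℝ)..1, f (1 - t)) = -∫ t in (0:ℝ)..1, f t := by
    simp_rw [key]
    exact intervalIntegral.integral_neg
  have : (∫ t in (0:ℝ)..1, f t) = 0 := by linarith [h3.symm.trans h4]
  exact this

lemma gammaInt (s : ℝ) (hs : -1 < s) :
    ∫ x in Ioi (0:ℝ), x ^ s * Real.exp (-x/2) = 2 ^ (s+1) * Real.Gamma (s+1) := by
  have := integral_rpow_mul_exp_neg_mul_Ioi (a := s + 1) (r := 1/2) (by linarith) (by norm_num)
  norm_num at this
  rw [← this]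
  simp only [show ∀ x:ℝ, -x/2 = -(1/2*x) from fun x => by ring]

lemma gammaIntegrable (s : ℝ) (hs : -1 < s) :
    IntegrableOn (fun x : ℝ => x ^ s * Real.exp (-x/2)) (Ioi 0) := by
  have := integrableOn_rpow_mul_exp_neg_mul_rpow (s := s) (p := 1) (b := 1/2) hs (by norm_num) (by norm_num)
  simp only [Real.rpow_one] at this
  convert this using 2 with x
  ring_nf

lemma mainlem (M : ℕ) (hM : Odd M) (β : ℝ) (hβ : -(1/2) < β) :
    ∫ x in Ioi (0:ℝ), x ^ β * Real.exp (-x/2) * laguerreL M (2*β+1) x = 0 := by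
  have hβ1 : (0:ℝ) < β + 1 := by linarith
  have hk1 : ∀ k : ℕ, (-1:ℝ) < β + k := fun k => by
    have : (0:ℝ) ≤ k := Nat.cast_nonneg k
    linarith
  set c : ℕ → ℝ := fun k => (-1 : ℝ) ^ k *
      (Real.Gamma ((M : ℝ) + (2*β+1) + 1) /
        (Real.Gamma ((k : ℝ) + (2*β+1) + 1) * (Nat.factorial (M - k)) * (Nat.factorial k)))
    with hc
  -- Step 1: swap integral and sum
  have step1 : ∫ x in Ioi (0:ℝ), x ^ β * Real.exp (-x/2) * laguerreL M (2*β+1) x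
      = ∑ k ∈ Finset.range (M+1), c k * (2 ^ (β+(k:ℝ)+1) * Real.Gamma (β+(k:ℝ)+1)) := by
    rw [MeasureTheory.setIntegral_congr_fun (measurableSet_Ioi)
      (g := fun x => ∑ k ∈ Finset.range (M+1), c k * (x ^ (β+(k:ℝ)) * Real.exp (-x/2)))]
    · rw [MeasureTheory.integral_finset_sum]
      · apply Finset.sum_congr rfl
        intro k _
        rw [MeasureTheory.integral_const_mul, gammaInt _ (hk1 k)]
      · intro k _
        exact ((gammaIntegrable (β+(k:ℝ)) (hk1 k)).const_mul _)
    · intro x hx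
      simp only [laguerreL, Finset.mul_sum, Finset.sum_congr]
      apply Finset.sum_congr rfl
      intro k _
      rw [Real.rpow_add hx, Real.rpow_natCast]
      ring
  rw [step1]
  -- Step 2: rewrite each Gamma via beta integral
  set B : ℕ → ℝ := fun k => ∫ t in (0:ℝ)..1, t ^ (β+(k:ℝ)) * (1 - t) ^ β with hBdef
  have hB : ∀ k : ℕ, Real.Gamma (β+(k:ℝ)+1) * Real.Gamma (β+1)
      = Real.Gamma ((k:ℝ) + (2*β+1) + 1) * B k := by
    intro k
    have h := betaVal (a := β+(k:ℝ)+1) (b := β+1) (by have := hk1 k; linarith) hβ1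
    have e1 : β+(k:ℝ)+1 - 1 = β+(k:ℝ) := by ring
    have e2 : β+1-1 = β := by ring
    have e3 : β+(k:ℝ)+1+(β+1) = (k:ℝ)+(2*β+1)+1 := by ring
    rw [e1, e2, e3] at h
    have hne : Real.Gamma ((k:ℝ)+(2*β+1)+1) ≠ 0 := by
      apply (Real.Gamma_pos_of_pos ?_).ne'
      have : (0:ℝ) ≤ k := Nat.cast_nonneg k
      linarith
    rw [hBdef]
    field_simp [h]
    rw [h, show β*2 = 2*β by ring, mul_div_assoc', eq_div_iff hne]
    ring
  -- Step 3: termwise rewrite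
  have hterm : ∀ k ∈ Finset.range (M+1),
      c k * (2 ^ (β+(k:ℝ)+1) * Real.Gamma (β+(k:ℝ)+1))
      = (Real.Gamma ((M : ℝ) + (2*β+1) + 1) * 2 ^ (β+1) / (Real.Gamma (β+1) * (Nat.factorial M)))
        * ((M.choose k : ℝ) * (-2)^k * B k) := by
    intro k hk
    have hkM : k ≤ M := Nat.lt_succ_iff.mp (Finset.mem_range.mp hk)
    have hch : ((Nat.factorial k : ℝ)) * ((Nat.factorial (M-k) : ℝ)) * (M.choose k : ℝ)
        = (Nat.factorial M : ℝ) := by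
      have h := Nat.choose_mul_factorial_mul_factorial hkM
      push_cast [← h]
      ring
    have hBk := hB k
    have hGβ : Real.Gamma (β+1) ≠ 0 := (Real.Gamma_pos_of_pos hβ1).ne'
    have hGk : Real.Gamma ((k:ℝ)+(2*β+1)+1) ≠ 0 := by
      apply (Real.Gamma_pos_of_pos ?_).ne'
      have : (0:ℝ) ≤ k := Nat.cast_nonneg k
      linarith
    have hMf : ((Nat.factorial M : ℕ) : ℝ) ≠ 0 := by positivity
    have hkf : ((Nat.factorial k : ℕ) : ℝ) ≠ 0 := by positivity
    have hMkf : ((Nat.factorial (M-k) : ℕ) : ℝ) ≠ 0 := by positivity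
    have h2 : (2:ℝ)^(β+(k:ℝ)+1) = 2^(β+1) * 2^(k:ℕ) := by
      rw [show β+(k:ℝ)+1 = (β+1)+(k:ℝ) by ring, Real.rpow_add two_pos, Real.rpow_natCast]
    have hneg : (-2:ℝ)^k = (-1)^k * 2^k := by rw [neg_pow]
    have hBk' : B k = Real.Gamma (β+(k:ℝ)+1) * Real.Gamma (β+1)
        / Real.Gamma ((k:ℝ)+(2*β+1)+1) := by
      rw [eq_div_iff hGk]
      linarith [hBk]
    have hch' : (M.choose k : ℝ)
        = (Nat.factorial M : ℝ)/((Nat.factorial k : ℝ)*((Nat.factorial (M-k) : ℝ))) := by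
      rw [eq_div_iff (by positivity)]
      linear_combination hch
    simp only [hc]
    rw [h2, hneg, hBk', hch']
    field_simp
  rw [Finset.sum_congr rfl hterm, ← Finset.mul_sum]
  -- Step 4: sum of beta integrals is the odd integral, hence zero
  have step4 : ∑ k ∈ Finset.range (M+1), (M.choose k : ℝ) * (-2)^k * B k = 0 := by
    have hswap : ∑ k ∈ Finset.range (M+1), (M.choose k : ℝ) * (-2)^k * B k
        = ∫ t in (0:ℝ)..1, ∑ k ∈ Finset.range (M+1),
            (M.choose k : ℝ) * (-2)^k * (t ^ (β+(k:ℝ)) * (1 - t) ^ β) := by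
      rw [intervalIntegral.integral_finset_sum]
      · apply Finset.sum_congr rfl
        intro k _
        rw [intervalIntegral.integral_const_mul]
      · intro k _
        exact (betaIntegrable (hk1 k) (by linarith)).const_mul _
    rw [hswap]
    have congrstep : (∫ t in (0:ℝ)..1, ∑ k ∈ Finset.range (M+1),
            (M.choose k : ℝ) * (-2)^k * (t ^ (β+(k:ℝ)) * (1 - t) ^ β))
        = ∫ t in (0:ℝ)..1, t ^ β * (1 - t) ^ β * (1 - 2*t) ^ M := by
      apply intervalIntegral.integral_congr_ae
      filter_upwards with t ht
      rw [Set.uIoc_of_le (by norm_num : (0:ℝ) ≤ 1)] at ht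
      have ht0 : 0 < t := ht.1
      have expand : (1 - 2*t) ^ M = ∑ k ∈ Finset.range (M+1),
          (-2*t)^k * 1^(M-k) * (M.choose k : ℝ) := by
        rw [show (1:ℝ)-2*t = (-2*t)+1 by ring, add_pow]
      rw [expand, Finset.mul_sum]
      apply Finset.sum_congr rfl
      intro k _
      rw [Real.rpow_add ht0, Real.rpow_natCast, mul_pow, one_pow]
      ring
    rw [congrstep]
    exact oddint (b := β) hM
  rw [step4, mul_zero]

end Aux

theorem stmt_17 (N : ℕ) (hN : 2 ≤ N) (hev : Even N) (α : ℝ) (hα : -1 < α) :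
    ∫ x in Ioi (0 : ℝ), x ^ (α / 2) * Real.exp (-x / 2) * laguerreL (N - 1) (α + 1) x
      = 0 := by
  have hodd : Odd (N - 1) := Nat.Even.sub_odd (by omega) hev odd_one
  have h := mainlem (N - 1) hodd (α / 2) (by linarith)
  have e : 2 * (α / 2) + 1 = α + 1 := by ring
  rw [e] at h
  exact h
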